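/- Fix ω > 0, β > 0, and a real constant C, and define E_β(x) = ∫₀^∞ (1/Γ(s)) e^{−Cs} s^{β−1} x^{s−1} ds for x > 0. Then E_β is integrable on (0,ω), i.e., m(β) := (1/Γ(β)) ∫₀^ω E_β(x) dx < ∞, and for every p ≥ 1 and every f ∈ L^p(0,ω), the function (V_β f)(x) = (1/Γ(β)) ∫₀ˣ E_β(x−t) f(t) dt belongs to L^p(0,ω) and satisfies ‖V_β f‖_{L^p} ≤ m(β)·‖f‖_{L^p}. -/

import Mathlib

open MeasureTheory Set
open scoped ENNReal


lemma lint_reflect (K : ℝ → ℝ≥0∞) (hK : Measurable K) (x : ℝ) :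
    ∫⁻ t, K (x - t) = ∫⁻ t, K t := by
  have h2 : ∫⁻ t, K (x + t) = ∫⁻ t, K t := lintegral_add_left_eq_self K x
  have hg : Measurable fun u : ℝ => K (x + u) := hK.comp (measurable_const.add measurable_id)
  calc ∫⁻ t, K (x - t) = ∫⁻ t, (fun u => K (x + u)) (-t) := by
        simp only [sub_eq_add_neg]
    _ = ∫⁻ u, K (x + u) ∂(Measure.map Neg.neg volume) := (lintegral_map hg measurable_neg).symm
    _ = ∫⁻ u, K (x + u) := by rw [Measure.map_neg_eq_self]
    _ = ∫⁻ t, K t := h2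

lemma young_one (K F : ℝ → ℝ≥0∞) (hK : Measurable K) (hF : Measurable F) :
    ∫⁻ x, ∫⁻ t, K (x - t) * F t = (∫⁻ u, K u) * ∫⁻ t, F t := by
  have hm : Measurable fun q : ℝ × ℝ => K (q.1 - q.2) * F q.2 :=
    (hK.comp (measurable_fst.sub measurable_snd)).mul (hF.comp measurable_snd)
  have hswap : (∫⁻ x, ∫⁻ t, K (x - t) * F t) = ∫⁻ t, ∫⁻ x, K (x - t) * F t := by
    exact lintegral_lintegral_swap hm.aemeasurable
  rw [hswap]
  have : ∀ t : ℝ, (∫⁻ x, K (x - t) * F t) = (∫⁻ u, K u) * F t := by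
    intro t
    rw [lintegral_mul_const _ (show Measurable fun x : ℝ => K (x - t) from
      hK.comp (measurable_id.sub measurable_const)), lintegral_sub_right_eq_self K t]
  simp_rw [this]
  rw [lintegral_const_mul _ hF]

lemma young_lp (K F : ℝ → ℝ≥0∞) (hK : Measurable K) (hF : Measurable F) {p : ℝ} (hp : 1 ≤ p) :
    ∫⁻ x, (∫⁻ t, K (x - t) * F t) ^ p ≤ (∫⁻ u, K u) ^ p * ∫⁻ t, F t ^ p := by
  rcases eq_or_lt_of_le hp with h1 | h1
  · subst h1
    simp only [ENNReal.rpow_one]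
    exact (young_one K F hK hF).le
  · set q : ℝ := p / (p - 1) with hq
    have hp0 : (0:ℝ) < p := by linarith
    have hp1 : p - 1 ≠ 0 := sub_ne_zero.mpr (by linarith)
    have hpq : p.HolderConjugate q := Real.HolderConjugate.conjExponent h1
    have hq0 : (0:ℝ) < q := hpq.symm.pos
    set A := ∫⁻ u, K u with hA
    have key : ∀ x : ℝ, (∫⁻ t, K (x - t) * F t) ≤
        (∫⁻ t, K (x - t) * F t ^ p) ^ (1/p) * A ^ (1/q) := by
      intro x
      have hKx : Measurable fun t : ℝ => K (x - t) := hK.comp (measurable_const.sub measurable_id)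
      have hf1 : AEMeasurable (fun t : ℝ => K (x - t) ^ (1/p) * F t) volume :=
        ((hKx.pow_const _).mul hF).aemeasurable
      have hg1 : AEMeasurable (fun t : ℝ => K (x - t) ^ (1/q)) volume :=
        (hKx.pow_const _).aemeasurable
      have H := ENNReal.lintegral_mul_le_Lp_mul_Lq volume hpq hf1 hg1
      have e1 : ∀ t : ℝ, (fun t => K (x - t) ^ (1/p) * F t) t * (fun t => K (x - t) ^ (1/q)) t
          = K (x - t) * F t := by
        intro t
        have : K (x - t) ^ (1/p) * K (x - t) ^ (1/q) = K (x - t) := by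
          rw [← ENNReal.rpow_add_of_nonneg _ _ (by positivity) (by positivity),
            show 1/p + 1/q = 1 by rw [one_div, one_div, hpq.inv_add_inv_eq_one],
            ENNReal.rpow_one]
        calc K (x - t) ^ (1/p) * F t * K (x - t) ^ (1/q)
            = K (x - t) ^ (1/p) * K (x - t) ^ (1/q) * F t := by ring
          _ = K (x - t) * F t := by rw [this]
      have e2 : ∀ t : ℝ, ((fun t => K (x - t) ^ (1/p) * F t) t) ^ p = K (x - t) * F t ^ p := by
        intro t
        rw [ENNReal.mul_rpow_of_nonneg _ _ hp0.le, ← ENNReal.rpow_mul,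
          one_div, inv_mul_cancel₀ hp0.ne', ENNReal.rpow_one]
      have e3 : ∀ t : ℝ, ((fun t => K (x - t) ^ (1/q)) t) ^ q = K (x - t) := by
        intro t
        rw [← ENNReal.rpow_mul, one_div, inv_mul_cancel₀ hq0.ne', ENNReal.rpow_one]
      calc (∫⁻ t, K (x - t) * F t)
          = ∫⁻ t, (fun t => K (x - t) ^ (1/p) * F t) t * (fun t => K (x - t) ^ (1/q)) t := by
            simp_rw [e1]
        _ ≤ (∫⁻ t, ((fun t => K (x - t) ^ (1/p) * F t) t) ^ p) ^ (1/p) *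
            (∫⁻ t, ((fun t => K (x - t) ^ (1/q)) t) ^ q) ^ (1/q) := H
        _ = (∫⁻ t, K (x - t) * F t ^ p) ^ (1/p) * A ^ (1/q) := by
            simp_rw [e2, e3]
            rw [lint_reflect K hK x]
    have key2 : ∀ x : ℝ, (∫⁻ t, K (x - t) * F t) ^ p ≤
        (∫⁻ t, K (x - t) * F t ^ p) * A ^ (p/q) := by
      intro x
      calc (∫⁻ t, K (x - t) * F t) ^ p
          ≤ ((∫⁻ t, K (x - t) * F t ^ p) ^ (1/p) * A ^ (1/q)) ^ p :=
            ENNReal.rpow_le_rpow (key x) hp0.le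
        _ = (∫⁻ t, K (x - t) * F t ^ p) * A ^ (p/q) := by
            rw [ENNReal.mul_rpow_of_nonneg _ _ hp0.le, ← ENNReal.rpow_mul, ← ENNReal.rpow_mul,
              one_div, inv_mul_cancel₀ hp0.ne', ENNReal.rpow_one]
            congr 2
            field_simp
    calc ∫⁻ x, (∫⁻ t, K (x - t) * F t) ^ p
        ≤ ∫⁻ x, (∫⁻ t, K (x - t) * F t ^ p) * A ^ (p/q) := lintegral_mono key2
      _ = (∫⁻ x, ∫⁻ t, K (x - t) * F t ^ p) * A ^ (p/q) := by
          apply lintegral_mul_const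
          exact (Measurable.lintegral_prod_right
            ((hK.comp (measurable_fst.sub measurable_snd)).mul
              ((hF.comp measurable_snd).pow_const p)))
      _ = (A * ∫⁻ t, F t ^ p) * A ^ (p/q) := by
          rw [young_one K (fun t => F t ^ p) hK (hF.pow_const p)]
      _ = A ^ p * ∫⁻ t, F t ^ p := by
          have : A * A ^ (p/q) = A ^ p := by
            have hpq1 : 1 + p/q = p := by
              have hp1 : p - 1 ≠ 0 := sub_ne_zero.mpr (by linarith)
              rw [hq]; field_simp; ring
            nth_rewrite 1 [← ENNReal.rpow_one A]
            rw [← ENNReal.rpow_add_of_nonneg _ _ zero_le_one (by positivity), hpq1]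
          calc A * (∫⁻ t, F t ^ p) * A ^ (p/q) = A * A ^ (p/q) * ∫⁻ t, F t ^ p := by ring
            _ = A ^ p * ∫⁻ t, F t ^ p := by rw [this]


lemma gamma_lb {K s : ℝ} (hK : 1 ≤ K) (hs : 1 ≤ s) :
    K ^ s * Real.exp (-(2*K)) ≤ Real.Gamma s := by
  have hs0 : (0:ℝ) < s := lt_of_lt_of_le one_pos hs
  have hK0 : (0:ℝ) < K := lt_of_lt_of_le one_pos hK
  rw [Real.Gamma_eq_integral hs0]
  have hsub : Ioc K (2*K) ⊆ Ioi (0:ℝ) := fun t ht => lt_trans hK0 ht.1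
  have hIntSub : IntegrableOn (fun t => Real.exp (-t) * t ^ (s-1)) (Ioc K (2*K)) volume :=
    (Real.GammaIntegral_convergent hs0).mono_set hsub
  have step1 : K ^ s * Real.exp (-(2*K))
      = ∫ _t in Ioc K (2*K), K ^ (s-1) * Real.exp (-(2*K)) := by
    rw [setIntegral_const, Real.volume_real_Ioc_of_le (by linarith), smul_eq_mul]
    have : (2*K - K) = K := by ring
    rw [this, ← mul_assoc]
    congr 1
    rw [show s = 1 + (s-1) by ring, Real.rpow_add hK0, Real.rpow_one]
    ring_nf
  have step2 : (∫ _t in Ioc K (2*K), K ^ (s-1) * Real.exp (-(2*K)))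
      ≤ ∫ t in Ioc K (2*K), Real.exp (-t) * t ^ (s-1) := by
    apply setIntegral_mono_on (integrableOn_const measure_Ioc_lt_top.ne) hIntSub
      measurableSet_Ioc
    intro t ht
    calc K ^ (s-1) * Real.exp (-(2*K)) ≤ t ^ (s-1) * Real.exp (-t) := by
          apply mul_le_mul (Real.rpow_le_rpow hK0.le ht.1.le (by linarith))
            (Real.exp_le_exp.mpr (by linarith [ht.2])) (Real.exp_pos _).le
            (Real.rpow_nonneg (by linarith [ht.1]) _)
      _ = Real.exp (-t) * t ^ (s-1) := mul_comm _ _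
  have step3 : (∫ t in Ioc K (2*K), Real.exp (-t) * t ^ (s-1))
      ≤ ∫ t in Ioi 0, Real.exp (-t) * t ^ (s-1) := by
    apply setIntegral_mono_set (Real.GammaIntegral_convergent hs0)
    · filter_upwards [ae_restrict_mem measurableSet_Ioi] with t ht
      have : (0:ℝ) < t := ht
      positivity
    · exact HasSubset.Subset.eventuallyLE hsub
  linarith

lemma master {ω β : ℝ} (hω : 0 < ω) (hβ : 0 < β) (C : ℝ) :
    ∃ D : ℝ, ∀ s : ℝ, 0 < s →
      1 / Real.Gamma s * Real.exp (-C * s) * s ^ (β - 1) * (ω ^ s / s)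
        ≤ D * (Real.exp (-s) * s ^ (β - 1) + Real.exp (-s) * s ^ β) := by
  set K : ℝ := max 1 (Real.exp (1 - C) * ω) with hKdef
  have hK1 : (1:ℝ) ≤ K := le_max_left _ _
  have hK0 : (0:ℝ) < K := lt_of_lt_of_le one_pos hK1
  set D : ℝ := Real.exp (2*K) + Real.exp 2 * Real.exp |C| * max 1 ω * Real.exp 1 with hDdef
  refine ⟨D, fun s hs0 => ?_⟩
  have hGpos : 0 < Real.Gamma s := Real.Gamma_pos_of_pos hs0
  have t1 : 0 ≤ Real.exp (-s) * s ^ (β - 1) := by positivity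
  have t2 : 0 ≤ Real.exp (-s) * s ^ β := by positivity
  rcases le_or_gt 1 s with hs1 | hs1
  · -- large s
    have hG1 : K ^ s * Real.exp (-(2*K)) ≤ Real.Gamma s := gamma_lb hK1 hs1
    have hKs : (0:ℝ) < K ^ s := Real.rpow_pos_of_pos hK0 s
    have hrecip : 1 / Real.Gamma s ≤ Real.exp (2*K) / K ^ s := by
      rw [div_le_div_iff₀ hGpos hKs]
      have h := mul_le_mul_of_nonneg_left hG1 (Real.exp_pos (2*K)).le
      rw [Real.exp_neg] at h
      have he : Real.exp (2*K) * (K ^ s * (Real.exp (2*K))⁻¹) = K ^ s := by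
        field_simp
      rw [he] at h
      linarith
    have hb1 : Real.exp (-C*s) * ω ^ s / K ^ s ≤ Real.exp (-s) := by
      have e1 : (Real.exp (-C) * ω / K) ^ s = Real.exp (-C*s) * ω ^ s / K ^ s := by
        rw [Real.div_rpow (by positivity) hK0.le, Real.mul_rpow (Real.exp_pos _).le hω.le,
          ← Real.exp_mul]
      have e2 : Real.exp (-C) * ω / K ≤ Real.exp (-1) := by
        rw [div_le_iff₀ hK0]
        have hKge : Real.exp (1 - C) * ω ≤ K := le_max_right _ _
        calc Real.exp (-C) * ω = Real.exp (-1) * (Real.exp (1 - C) * ω) := by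
              rw [← mul_assoc, ← Real.exp_add]; ring_nf
          _ ≤ Real.exp (-1) * K := by
              exact mul_le_mul_of_nonneg_left hKge (Real.exp_pos _).le
      calc Real.exp (-C*s) * ω ^ s / K ^ s = (Real.exp (-C) * ω / K) ^ s := e1.symm
        _ ≤ Real.exp (-1) ^ s := Real.rpow_le_rpow (by positivity) e2 hs0.le
        _ = Real.exp (-s) := by rw [← Real.exp_mul]; ring_nf
    have hb2 : s ^ (β - 1) / s ≤ s ^ β := by
      calc s ^ (β - 1) / s ≤ s ^ (β - 1) := div_le_self (by positivity) hs1
        _ ≤ s ^ β := Real.rpow_le_rpow_of_exponent_le hs1 (by linarith)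
    calc 1 / Real.Gamma s * Real.exp (-C*s) * s ^ (β - 1) * (ω ^ s / s)
        ≤ Real.exp (2*K) / K ^ s * Real.exp (-C*s) * s ^ (β - 1) * (ω ^ s / s) := by
          have hrest : 0 ≤ Real.exp (-C*s) * s ^ (β - 1) * (ω ^ s / s) := by positivity
          nlinarith [mul_le_mul_of_nonneg_right hrecip hrest]
      _ = Real.exp (2*K) * (Real.exp (-C*s) * ω ^ s / K ^ s) * (s ^ (β - 1) / s) := by
          ring
      _ ≤ Real.exp (2*K) * Real.exp (-s) * s ^ β := by
          apply mul_le_mul (mul_le_mul_of_nonneg_left hb1 (Real.exp_pos _).le) hb2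
            (by positivity) (by positivity)
      _ ≤ D * (Real.exp (-s) * s ^ (β - 1) + Real.exp (-s) * s ^ β) := by
          have hrest : 0 ≤ Real.exp 2 * Real.exp |C| * max 1 ω * Real.exp 1 := by positivity
          nlinarith [mul_nonneg (Real.exp_pos (2*K)).le t1, mul_nonneg hrest t2,
            mul_nonneg hrest t1]
  · -- small s
    have hΓ1 : Real.exp (-(2:ℝ)) ≤ Real.Gamma (s+1) := by
      have := gamma_lb (le_refl (1:ℝ)) (by linarith : (1:ℝ) ≤ s + 1)
      simpa using this
    have hG : Real.Gamma (s+1) = s * Real.Gamma s := Real.Gamma_add_one hs0.ne'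
    have hrecip : 1 / Real.Gamma s ≤ Real.exp 2 * s := by
      rw [div_le_iff₀ hGpos]
      have h2 : Real.exp 2 * Real.exp (-(2:ℝ)) = 1 := by rw [← Real.exp_add]; norm_num
      have h3 : (1:ℝ) ≤ Real.exp 2 * (s * Real.Gamma s) := by
        calc (1:ℝ) = Real.exp 2 * Real.exp (-(2:ℝ)) := h2.symm
          _ ≤ Real.exp 2 * Real.Gamma (s+1) :=
              mul_le_mul_of_nonneg_left hΓ1 (Real.exp_pos 2).le
          _ = Real.exp 2 * (s * Real.Gamma s) := by rw [hG]
      rw [mul_assoc]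
      exact h3
    have hexpC : Real.exp (-C*s) ≤ Real.exp |C| := by
      apply Real.exp_le_exp.mpr
      calc -C * s ≤ |(-C) * s| := le_abs_self _
        _ = |C| * |s| := by rw [abs_mul, abs_neg]
        _ ≤ |C| * 1 := by
            apply mul_le_mul_of_nonneg_left _ (abs_nonneg C)
            rw [abs_of_pos hs0]; linarith
        _ = |C| := mul_one _
    have homega : ω ^ s ≤ max 1 ω := by
      rcases le_total ω 1 with h | h
      · exact le_trans (Real.rpow_le_one hω.le h hs0.le) (le_max_left _ _)
      · calc ω ^ s ≤ ω ^ (1:ℝ) := Real.rpow_le_rpow_of_exponent_le h (by linarith)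
          _ = ω := Real.rpow_one ω
          _ ≤ max 1 ω := le_max_right _ _
    have hone : (1:ℝ) ≤ Real.exp 1 * Real.exp (-s) := by
      rw [← Real.exp_add]
      exact Real.one_le_exp (by linarith)
    calc 1 / Real.Gamma s * Real.exp (-C*s) * s ^ (β - 1) * (ω ^ s / s)
        ≤ (Real.exp 2 * s) * Real.exp (-C*s) * s ^ (β - 1) * (ω ^ s / s) := by
          have hrest : 0 ≤ Real.exp (-C*s) * s ^ (β - 1) * (ω ^ s / s) := by positivity
          nlinarith [mul_le_mul_of_nonneg_right hrecip hrest]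
      _ = Real.exp 2 * Real.exp (-C*s) * ω ^ s * s ^ (β - 1) := by
          field_simp
      _ ≤ Real.exp 2 * Real.exp |C| * max 1 ω * s ^ (β - 1) := by
          have h1 : 0 ≤ s ^ (β - 1) := by positivity
          have h2 : (0:ℝ) < max 1 ω := lt_of_lt_of_le one_pos (le_max_left _ _)
          nlinarith [mul_le_mul hexpC homega (by positivity : (0:ℝ) ≤ ω ^ s)
            (Real.exp_pos |C|).le, Real.exp_pos 2,
            mul_le_mul_of_nonneg_left
              (mul_le_mul hexpC homega (by positivity : (0:ℝ) ≤ ω ^ s) (Real.exp_pos |C|).le)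
              (Real.exp_pos 2).le,
            mul_le_mul_of_nonneg_right
              (mul_le_mul_of_nonneg_left
                (mul_le_mul hexpC homega (by positivity : (0:ℝ) ≤ ω ^ s) (Real.exp_pos |C|).le)
                (Real.exp_pos 2).le) h1]
      _ ≤ Real.exp 2 * Real.exp |C| * max 1 ω * Real.exp 1 * (Real.exp (-s) * s ^ (β - 1)) := by
          have h1 : 0 ≤ s ^ (β - 1) := by positivity
          have h2 : 0 ≤ Real.exp 2 * Real.exp |C| * max 1 ω := by positivity
          calc Real.exp 2 * Real.exp |C| * max 1 ω * s ^ (β - 1)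
              = Real.exp 2 * Real.exp |C| * max 1 ω * 1 * s ^ (β - 1) := by ring
            _ ≤ Real.exp 2 * Real.exp |C| * max 1 ω * (Real.exp 1 * Real.exp (-s)) *
                s ^ (β - 1) := by
                apply mul_le_mul_of_nonneg_right _ h1
                exact mul_le_mul_of_nonneg_left hone h2
            _ = Real.exp 2 * Real.exp |C| * max 1 ω * Real.exp 1 *
                (Real.exp (-s) * s ^ (β - 1)) := by ring
      _ ≤ D * (Real.exp (-s) * s ^ (β - 1) + Real.exp (-s) * s ^ β) := by
          nlinarith [Real.exp_pos (2*K), mul_nonneg (Real.exp_pos (2*K)).le t1,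
            mul_nonneg (Real.exp_pos (2*K)).le t2,
            mul_nonneg (by positivity : (0:ℝ) ≤ Real.exp 2 * Real.exp |C| * max 1 ω * Real.exp 1) t2]

lemma part1 {ω β C : ℝ} (hω : 0 < ω) (hβ : 0 < β) (E : ℝ → ℝ)
    (hE : ∀ x : ℝ, 0 < x → E x = ∫ s in Ioi (0:ℝ),
      1 / Real.Gamma s * Real.exp (-C * s) * s ^ (β - 1) * x ^ (s - 1)) :
    IntegrableOn E (Ioo 0 ω) volume := by
  set φ : ℝ → ℝ := fun s => 1 / Real.Gamma s * Real.exp (-C * s) * s ^ (β - 1) with hφdef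
  set Φ : ℝ × ℝ → ℝ := fun q => φ q.2 * q.1 ^ (q.2 - 1) with hΦdef
  set μI : Measure ℝ := volume.restrict (Ioo 0 ω) with hμI
  set νs : Measure ℝ := volume.restrict (Ioi 0) with hνs
  have hφnn : ∀ s : ℝ, 0 < s → 0 ≤ φ s := by
    intro s hs
    have h1 : 0 < Real.Gamma s := Real.Gamma_pos_of_pos hs
    have : 0 ≤ 1 / Real.Gamma s := by positivity
    positivity
  -- continuity
  have hSm : MeasurableSet ((Ioo (0:ℝ) ω) ×ˢ (Ioi (0:ℝ))) :=
    measurableSet_Ioo.prod measurableSet_Ioi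
  have hcont : ContinuousOn Φ ((Ioo (0:ℝ) ω) ×ˢ (Ioi (0:ℝ))) := by
    have hΓ : ContinuousOn (fun q : ℝ × ℝ => Real.Gamma q.2) ((Ioo (0:ℝ) ω) ×ˢ (Ioi (0:ℝ))) := by
      intro q hq
      have h2 : (0:ℝ) < q.2 := hq.2
      have : ContinuousAt Real.Gamma q.2 :=
        (Real.differentiableAt_Gamma (fun m => by
          have hm : -(m:ℝ) ≤ 0 := neg_nonpos.mpr (Nat.cast_nonneg m)
          intro hcon; rw [hcon] at h2; linarith)).continuousAt
      exact (this.comp continuous_snd.continuousAt).continuousWithinAt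
    have p1 : ContinuousOn (fun q : ℝ × ℝ => 1 / Real.Gamma q.2)
        ((Ioo (0:ℝ) ω) ×ˢ (Ioi (0:ℝ))) :=
      continuousOn_const.div hΓ (fun q hq => (Real.Gamma_pos_of_pos hq.2).ne')
    have p2 : ContinuousOn (fun q : ℝ × ℝ => Real.exp (-C * q.2))
        ((Ioo (0:ℝ) ω) ×ˢ (Ioi (0:ℝ))) :=
      (Real.continuous_exp.comp (continuous_const.mul continuous_snd)).continuousOn
    have p3 : ContinuousOn (fun q : ℝ × ℝ => q.2 ^ (β - 1))
        ((Ioo (0:ℝ) ω) ×ˢ (Ioi (0:ℝ))) :=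
      ContinuousOn.rpow continuous_snd.continuousOn continuousOn_const
        (fun q hq => Or.inl (ne_of_gt hq.2))
    have p4 : ContinuousOn (fun q : ℝ × ℝ => q.1 ^ (q.2 - 1))
        ((Ioo (0:ℝ) ω) ×ˢ (Ioi (0:ℝ))) :=
      ContinuousOn.rpow continuous_fst.continuousOn
        (continuous_snd.sub continuous_const).continuousOn
        (fun q hq => Or.inl (ne_of_gt hq.1.1))
    exact ((p1.mul p2).mul p3).mul p4
  have hAESM : AEStronglyMeasurable Φ (μI.prod νs) := by
    rw [hμI, hνs, Measure.prod_restrict]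
    exact hcont.aestronglyMeasurable hSm
  -- integrability of x ^ (s-1) on (0, ω)
  have hIntx : ∀ s : ℝ, 0 < s → IntegrableOn (fun x : ℝ => x ^ (s - 1)) (Ioo 0 ω) volume := by
    intro s hs
    have h1 := intervalIntegral.intervalIntegrable_rpow' (a := 0) (b := ω)
      (by linarith : (-1:ℝ) < s - 1)
    rw [intervalIntegrable_iff_integrableOn_Ioc_of_le hω.le] at h1
    exact h1.mono_set Ioo_subset_Ioc_self
  have hval : ∀ s : ℝ, 0 < s → (∫ x in Ioo (0:ℝ) ω, x ^ (s - 1)) = ω ^ s / s := by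
    intro s hs
    have h1 : (∫ x in (0:ℝ)..ω, x ^ (s - 1)) = (ω ^ (s-1+1) - 0 ^ (s-1+1)) / (s-1+1) :=
      integral_rpow (Or.inl (by linarith))
    rw [intervalIntegral.integral_of_le hω.le, integral_Ioc_eq_integral_Ioo] at h1
    rw [h1, show s - 1 + 1 = s by ring, Real.zero_rpow hs.ne']
    ring
  -- the finite double lintegral
  obtain ⟨D, hD⟩ := master hω hβ C
  have hbig : IntegrableOn
      (fun s => D * (Real.exp (-s) * s ^ (β - 1) + Real.exp (-s) * s ^ β)) (Ioi 0) volume := by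
    have h1 := Real.GammaIntegral_convergent hβ
    have h2 : IntegrableOn (fun s : ℝ => Real.exp (-s) * s ^ β) (Ioi 0) volume := by
      have := Real.GammaIntegral_convergent (by linarith : (0:ℝ) < β + 1)
      simpa using this
    exact (h1.add h2).const_mul D
  have hlintbig : ∫⁻ s, ENNReal.ofReal
      (D * (Real.exp (-s) * s ^ (β - 1) + Real.exp (-s) * s ^ β)) ∂νs < ⊤ := by
    refine lt_of_le_of_lt (lintegral_mono fun s => ?_) hbig.2
    exact Real.ofReal_le_enorm _
  have hlim : ∫⁻ q, (‖Φ q‖₊ : ℝ≥0∞) ∂(μI.prod νs) < ⊤ := by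
    rw [lintegral_prod _ hAESM.aemeasurable.nnnorm.coe_nnreal_ennreal,
      lintegral_lintegral_swap hAESM.aemeasurable.nnnorm.coe_nnreal_ennreal]
    have hinner : ∀ s : ℝ, 0 < s →
        (∫⁻ x, (‖Φ (x, s)‖₊ : ℝ≥0∞) ∂μI) = ENNReal.ofReal (φ s * (ω ^ s / s)) := by
      intro s hs
      have hmeasx : Measurable fun x : ℝ => ENNReal.ofReal (x ^ (s - 1)) :=
        (measurable_id.pow_const (s-1)).ennreal_ofReal
      have e1 : ∫⁻ x, (‖Φ (x, s)‖₊ : ℝ≥0∞) ∂μI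
          = ∫⁻ x, ENNReal.ofReal (φ s) * ENNReal.ofReal (x ^ (s - 1)) ∂μI := by
        apply lintegral_congr_ae
        rw [hμI]
        filter_upwards [ae_restrict_mem measurableSet_Ioo] with x hx
        have hx1 : (0:ℝ) ≤ x ^ (s - 1) := Real.rpow_nonneg hx.1.le _
        have hnn : (0:ℝ) ≤ Φ (x, s) := mul_nonneg (hφnn s hs) hx1
        rw [← ENNReal.ofReal_mul (hφnn s hs)]
        exact Real.enorm_eq_ofReal hnn
      have hnnae : 0 ≤ᶠ[ae (volume.restrict (Ioo (0:ℝ) ω))] fun x : ℝ => x ^ (s - 1) := by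
        filter_upwards [ae_restrict_mem measurableSet_Ioo] with x hx
        exact Real.rpow_nonneg hx.1.le _
      rw [e1, lintegral_const_mul _ hmeasx, hμI,
        ← ofReal_integral_eq_lintegral_ofReal (hIntx s hs) hnnae,
        hval s hs, ← ENNReal.ofReal_mul (hφnn s hs)]
    calc (∫⁻ s, (∫⁻ x, (‖Φ (x, s)‖₊ : ℝ≥0∞) ∂μI) ∂νs)
        ≤ ∫⁻ s, ENNReal.ofReal
            (D * (Real.exp (-s) * s ^ (β - 1) + Real.exp (-s) * s ^ β)) ∂νs := by
          apply lintegral_mono_ae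
          rw [hνs]
          filter_upwards [ae_restrict_mem measurableSet_Ioi] with s hs
          rw [hinner s hs]
          exact ENNReal.ofReal_le_ofReal (hD s hs)
      _ < ⊤ := hlintbig
  have hΦint : Integrable Φ (μI.prod νs) := ⟨hAESM, hlim⟩
  have h8 : Integrable (fun x => ∫ s, Φ (x, s) ∂νs) μI := hΦint.integral_prod_left
  apply h8.congr
  rw [hμI]
  filter_upwards [ae_restrict_mem measurableSet_Ioo] with x hx
  rw [hE x hx.1]

theorem stmt_10 (ω : ℝ) (hω : 0 < ω) (β : ℝ) (hβ : 0 < β) (C : ℝ) (E : ℝ → ℝ)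
    (hE : ∀ x : ℝ, 0 < x →
      E x = ∫ s in Ioi (0 : ℝ),
        (1 / Real.Gamma s) * Real.exp (-C * s) * s ^ (β - 1) * x ^ (s - 1)) :
    IntegrableOn E (Ioo 0 ω) volume ∧
    ∀ p : ℝ, 1 ≤ p → ∀ f : ℝ → ℂ,
      MemLp f (ENNReal.ofReal p) (volume.restrict (Ioo 0 ω)) →
      MemLp (fun x : ℝ => (1 / Real.Gamma β : ℝ) • ∫ t in Ioo (0 : ℝ) x, (E (x - t) : ℂ) * f t)
        (ENNReal.ofReal p) (volume.restrict (Ioo 0 ω)) ∧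
      eLpNorm
          (fun x : ℝ => (1 / Real.Gamma β : ℝ) • ∫ t in Ioo (0 : ℝ) x, (E (x - t) : ℂ) * f t)
          (ENNReal.ofReal p) (volume.restrict (Ioo 0 ω)) ≤
        ENNReal.ofReal ((1 / Real.Gamma β) * ∫ x in Ioo (0 : ℝ) ω, E x) *
          eLpNorm f (ENNReal.ofReal p) (volume.restrict (Ioo 0 ω)) := by
  have hP1 : IntegrableOn E (Ioo 0 ω) volume := part1 hω hβ E hE
  refine ⟨hP1, ?_⟩
  intro p hp f hf
  have hp0 : (0:ℝ) < p := by linarith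
  set P : ℝ≥0∞ := ENNReal.ofReal p with hPdef
  have hP0 : P ≠ 0 := (ENNReal.ofReal_pos.mpr hp0).ne'
  have hPt : P ≠ ⊤ := ENNReal.ofReal_ne_top
  have hPr : P.toReal = p := ENNReal.toReal_ofReal hp0.le
  set c : ℝ := 1 / Real.Gamma β with hcdef
  have hc : 0 ≤ c := by
    rw [hcdef]
    exact (div_pos one_pos (Real.Gamma_pos_of_pos hβ)).le
  set μI : Measure ℝ := volume.restrict (Ioo 0 ω) with hμI
  -- measurable versions
  have hEm : AEStronglyMeasurable E μI := hP1.1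
  set E' := hEm.mk E with hE'def
  have hE'sm : StronglyMeasurable E' := hEm.stronglyMeasurable_mk
  have hEE' : E =ᶠ[ae μI] E' := hEm.ae_eq_mk
  have hfm : AEStronglyMeasurable f μI := hf.1
  set f' := hfm.mk f with hf'def
  have hf'sm : StronglyMeasurable f' := hfm.stronglyMeasurable_mk
  have hff' : f =ᶠ[ae μI] f' := hfm.ae_eq_mk
  set K : ℝ → ℝ≥0∞ := (Ioo 0 ω).indicator (fun u => (‖E' u‖₊ : ℝ≥0∞)) with hKdef
  set F : ℝ → ℝ≥0∞ := (Ioo 0 ω).indicator (fun t => (‖f' t‖₊ : ℝ≥0∞)) with hFdef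
  have hKm : Measurable K :=
    (hE'sm.measurable.nnnorm.coe_nnreal_ennreal).indicator measurableSet_Ioo
  have hFm : Measurable F :=
    (hf'sm.measurable.nnnorm.coe_nnreal_ennreal).indicator measurableSet_Ioo
  have hKae : (Ioo 0 ω).indicator (fun u => (‖E u‖₊ : ℝ≥0∞)) =ᶠ[ae volume] K := by
    have h1 : ∀ᵐ u ∂(volume : Measure ℝ), u ∈ Ioo 0 ω → E u = E' u :=
      (ae_restrict_iff' measurableSet_Ioo).mp hEE'
    filter_upwards [h1] with u hu
    by_cases h : u ∈ Ioo (0:ℝ) ω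
    · rw [hKdef, Set.indicator_of_mem h, Set.indicator_of_mem h, hu h]
    · rw [hKdef, Set.indicator_of_notMem h, Set.indicator_of_notMem h]
  have hFae : (Ioo 0 ω).indicator (fun t => (‖f t‖₊ : ℝ≥0∞)) =ᶠ[ae volume] F := by
    have h1 : ∀ᵐ u ∂(volume : Measure ℝ), u ∈ Ioo 0 ω → f u = f' u :=
      (ae_restrict_iff' measurableSet_Ioo).mp hff'
    filter_upwards [h1] with u hu
    by_cases h : u ∈ Ioo (0:ℝ) ω
    · rw [hFdef, Set.indicator_of_mem h, Set.indicator_of_mem h, hu h]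
    · rw [hFdef, Set.indicator_of_notMem h, Set.indicator_of_notMem h]
  -- reflection is measure preserving
  have hmp : ∀ x : ℝ, MeasurePreserving (fun t : ℝ => x - t) volume volume := by
    intro x
    have h1 : MeasurePreserving (fun t : ℝ => -t) (volume : Measure ℝ) volume :=
      ⟨measurable_neg, Measure.map_neg_eq_self _⟩
    have h2 : MeasurePreserving (fun t : ℝ => x + t) (volume : Measure ℝ) volume :=
      ⟨measurable_const_add x, map_add_left_eq_self volume x⟩
    have h3 := h2.comp h1
    have : ((fun t : ℝ => x + t) ∘ fun t : ℝ => -t) = fun t : ℝ => x - t := by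
      funext t; simp [sub_eq_add_neg]
    rwa [this] at h3
  -- nonnegativity of E on (0, ω)
  have hEnn : ∀ᵐ x ∂μI, 0 ≤ E x := by
    rw [hμI]
    filter_upwards [ae_restrict_mem measurableSet_Ioo] with x hx
    rw [hE x hx.1]
    apply setIntegral_nonneg measurableSet_Ioi
    intro s hs
    have h1 : 0 < Real.Gamma s := Real.Gamma_pos_of_pos hs
    have h2 : 0 ≤ 1 / Real.Gamma s := by positivity
    have h3 : (0:ℝ) < x := hx.1
    have h4 : (0:ℝ) < s := hs
    positivity
  set A : ℝ≥0∞ := ∫⁻ u, K u with hAdef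
  have hA : A = ENNReal.ofReal (∫ x in Ioo (0:ℝ) ω, E x) := by
    rw [hAdef, lintegral_congr_ae hKae.symm, lintegral_indicator measurableSet_Ioo,
      ofReal_integral_eq_lintegral_ofReal hP1 hEnn]
    apply lintegral_congr_ae
    filter_upwards [hEnn] with u hu
    exact Real.enorm_eq_ofReal hu
  -- pointwise domination of the convolution integral
  have hpt : ∀ x ∈ Ioo (0:ℝ) ω,
      (‖∫ t in Ioo (0:ℝ) x, (E (x - t) : ℂ) * f t‖₊ : ℝ≥0∞) ≤ ∫⁻ t, K (x - t) * F t := by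
    intro x hx
    have step3 : ∀ t : ℝ,
        (Ioo (0:ℝ) x).indicator (fun t => (‖(E (x - t) : ℂ) * f t‖₊ : ℝ≥0∞)) t
          ≤ (Ioo 0 ω).indicator (fun u => (‖E u‖₊ : ℝ≥0∞)) (x - t) *
            (Ioo 0 ω).indicator (fun t => (‖f t‖₊ : ℝ≥0∞)) t := by
      intro t
      by_cases h : t ∈ Ioo (0:ℝ) x
      · rw [Set.indicator_of_mem h]
        have h1 : x - t ∈ Ioo (0:ℝ) ω := ⟨by linarith [h.2], by linarith [h.1, hx.2]⟩
        have h2 : t ∈ Ioo (0:ℝ) ω := ⟨h.1, by linarith [h.2, hx.2]⟩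
        rw [Set.indicator_of_mem h1, Set.indicator_of_mem h2, nnnorm_mul, ENNReal.coe_mul,
          Complex.nnnorm_real]
      · rw [Set.indicator_of_notMem h]; exact zero_le
    have step4 : (∫⁻ t, (Ioo 0 ω).indicator (fun u => (‖E u‖₊ : ℝ≥0∞)) (x - t) *
        (Ioo 0 ω).indicator (fun t => (‖f t‖₊ : ℝ≥0∞)) t) = ∫⁻ t, K (x - t) * F t := by
      apply lintegral_congr_ae
      filter_upwards [(hmp x).quasiMeasurePreserving.ae_eq_comp hKae, hFae] with t h1 h2
      simp only [Function.comp_apply] at h1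
      rw [h1, h2]
    calc (‖∫ t in Ioo (0:ℝ) x, (E (x - t) : ℂ) * f t‖₊ : ℝ≥0∞)
        ≤ ∫⁻ t in Ioo (0:ℝ) x, ‖(E (x - t) : ℂ) * f t‖₊ :=
          enorm_integral_le_lintegral_enorm _
      _ = ∫⁻ t, (Ioo (0:ℝ) x).indicator (fun t => (‖(E (x - t) : ℂ) * f t‖₊ : ℝ≥0∞)) t :=
          (lintegral_indicator measurableSet_Ioo _).symm
      _ ≤ ∫⁻ t, (Ioo 0 ω).indicator (fun u => (‖E u‖₊ : ℝ≥0∞)) (x - t) *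
            (Ioo 0 ω).indicator (fun t => (‖f t‖₊ : ℝ≥0∞)) t := lintegral_mono step3
      _ = ∫⁻ t, K (x - t) * F t := step4
  -- main lintegral bound
  have hmeas2 : Measurable fun x : ℝ => (∫⁻ t, K (x - t) * F t) ^ p := by
    have hj : Measurable (Function.uncurry fun x t : ℝ => K (x - t) * F t) :=
      (hKm.comp (measurable_fst.sub measurable_snd)).mul (hFm.comp measurable_snd)
    exact (Measurable.lintegral_prod_right hj).pow_const p
  have hbound : (∫⁻ x, (‖(c • ∫ t in Ioo (0:ℝ) x, (E (x - t) : ℂ) * f t : ℂ)‖₊ : ℝ≥0∞) ^ p ∂μI)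
      ≤ ENNReal.ofReal c ^ p * (A ^ p * ∫⁻ t, F t ^ p) := by
    calc (∫⁻ x, (‖(c • ∫ t in Ioo (0:ℝ) x, (E (x - t) : ℂ) * f t : ℂ)‖₊ : ℝ≥0∞) ^ p ∂μI)
        ≤ ∫⁻ x, (ENNReal.ofReal c * ∫⁻ t, K (x - t) * F t) ^ p ∂μI := by
          apply lintegral_mono_ae
          rw [hμI]
          filter_upwards [ae_restrict_mem measurableSet_Ioo] with x hx
          apply ENNReal.rpow_le_rpow _ hp0.le
          have e : (‖(c • ∫ t in Ioo (0:ℝ) x, (E (x - t) : ℂ) * f t : ℂ)‖₊ : ℝ≥0∞)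
              = (‖c‖₊ : ℝ≥0∞) * ‖∫ t in Ioo (0:ℝ) x, (E (x - t) : ℂ) * f t‖₊ := by
            rw [nnnorm_smul, ENNReal.coe_mul]
          rw [e, ← Real.enorm_eq_ofReal hc]
          exact mul_le_mul_right (hpt x hx) _
      _ = ENNReal.ofReal c ^ p * ∫⁻ x, (∫⁻ t, K (x - t) * F t) ^ p ∂μI := by
          simp_rw [ENNReal.mul_rpow_of_nonneg _ _ hp0.le]
          exact lintegral_const_mul _ hmeas2
      _ ≤ ENNReal.ofReal c ^ p * ∫⁻ x, (∫⁻ t, K (x - t) * F t) ^ p :=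
          mul_le_mul_right (by rw [hμI]; exact setLIntegral_le_lintegral _ _) _
      _ ≤ ENNReal.ofReal c ^ p * (A ^ p * ∫⁻ t, F t ^ p) :=
          mul_le_mul_right (young_lp K F hKm hFm hp) _
  -- identify ∫⁻ F^p with (eLpNorm f)^p
  have hFp : (∫⁻ t, F t ^ p) = eLpNorm f P μI ^ p := by
    have e0 : ∀ t : ℝ, F t ^ p = (Ioo 0 ω).indicator (fun t => (‖f' t‖₊ : ℝ≥0∞) ^ p) t := by
      intro t
      by_cases h : t ∈ Ioo (0:ℝ) ω
      · rw [hFdef, Set.indicator_of_mem h, Set.indicator_of_mem h]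
      · rw [hFdef, Set.indicator_of_notMem h, Set.indicator_of_notMem h,
          ENNReal.zero_rpow_of_pos hp0]
    simp_rw [e0]
    rw [lintegral_indicator measurableSet_Ioo]
    have e1 : (∫⁻ t in Ioo (0:ℝ) ω, (‖f' t‖₊ : ℝ≥0∞) ^ p)
        = ∫⁻ t in Ioo (0:ℝ) ω, (‖f t‖₊ : ℝ≥0∞) ^ p := by
      apply lintegral_congr_ae
      rw [← hμI]
      filter_upwards [hff'] with t ht
      rw [ht]
    rw [e1, eLpNorm_eq_lintegral_rpow_enorm_toReal hP0 hPt, hPr, ← ENNReal.rpow_mul,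
      one_div, inv_mul_cancel₀ hp0.ne', ENNReal.rpow_one, hμI]
    rfl
  -- final norm bound
  have hnorm : eLpNorm (fun x : ℝ => c • ∫ t in Ioo (0:ℝ) x, (E (x - t) : ℂ) * f t) P μI
      ≤ ENNReal.ofReal c * A * eLpNorm f P μI := by
    rw [eLpNorm_eq_lintegral_rpow_enorm_toReal hP0 hPt, hPr]
    rw [hFp] at hbound
    calc (∫⁻ x, (‖(c • ∫ t in Ioo (0:ℝ) x, (E (x - t) : ℂ) * f t : ℂ)‖₊ : ℝ≥0∞) ^ p ∂μI) ^ (1/p)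
        ≤ (ENNReal.ofReal c ^ p * (A ^ p * eLpNorm f P μI ^ p)) ^ (1/p) :=
          ENNReal.rpow_le_rpow hbound (by positivity)
      _ = ENNReal.ofReal c * A * eLpNorm f P μI := by
          rw [ENNReal.mul_rpow_of_nonneg _ _ (by positivity),
            ENNReal.mul_rpow_of_nonneg _ _ (by positivity),
            ← ENNReal.rpow_mul, ← ENNReal.rpow_mul, ← ENNReal.rpow_mul,
            mul_one_div_cancel hp0.ne', ENNReal.rpow_one, ENNReal.rpow_one, ENNReal.rpow_one,
            mul_assoc]
  -- measurability of the convolution operator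
  set F2 : ℝ × ℝ → ℂ := fun q =>
    (((Ioo 0 ω).indicator E' (q.1 - q.2) : ℝ) : ℂ) * ((Ioo 0 ω).indicator f' q.2) with hF2def
  have hF2m : Measurable F2 :=
    ((Complex.measurable_ofReal.comp
        ((hE'sm.measurable.indicator measurableSet_Ioo).comp
          (measurable_fst.sub measurable_snd))).mul
      ((hf'sm.measurable.indicator measurableSet_Ioo).comp measurable_snd))
  have hh : StronglyMeasurable (fun x : ℝ => ∫ t, F2 (x, t)) :=
    hF2m.stronglyMeasurable.integral_prod_right'
  have hgid : ∀ x ∈ Ioo (0:ℝ) ω,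
      (∫ t in Ioo (0:ℝ) x, (E (x - t) : ℂ) * f t) = ∫ t, F2 (x, t) := by
    intro x hx
    have s1 : (∫ t in Ioo (0:ℝ) x, (E (x - t) : ℂ) * f t)
        = ∫ t, (((Ioo 0 ω).indicator E (x - t) : ℝ) : ℂ) * ((Ioo 0 ω).indicator f t) := by
      rw [← integral_indicator measurableSet_Ioo]
      apply integral_congr_ae
      apply Filter.Eventually.of_forall
      intro t
      beta_reduce
      by_cases h : t ∈ Ioo (0:ℝ) x
      · rw [Set.indicator_of_mem h]
        have h1 : x - t ∈ Ioo (0:ℝ) ω := ⟨by linarith [h.2], by linarith [h.1, hx.2]⟩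
        have h2 : t ∈ Ioo (0:ℝ) ω := ⟨h.1, by linarith [h.2, hx.2]⟩
        rw [Set.indicator_of_mem h1, Set.indicator_of_mem h2]
      · rw [Set.indicator_of_notMem h]
        by_cases h2 : t ∈ Ioo (0:ℝ) ω
        · have hxt : x - t ≤ 0 := by
            rcases h2 with ⟨ht0, htω⟩
            by_contra hcon
            push_neg at hcon
            exact h ⟨ht0, by linarith⟩
          have h3 : x - t ∉ Ioo (0:ℝ) ω := by
            intro hcon
            exact absurd hcon.1 (not_lt.mpr hxt)
          rw [Set.indicator_of_notMem h3]
          simp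
        · rw [Set.indicator_of_notMem h2]
          simp
    have s2 : (∫ t, (((Ioo 0 ω).indicator E (x - t) : ℝ) : ℂ) * ((Ioo 0 ω).indicator f t))
        = ∫ t, F2 (x, t) := by
      apply integral_congr_ae
      have hEc : (fun u : ℝ => (((Ioo 0 ω).indicator E u : ℝ) : ℂ))
          =ᶠ[ae (volume : Measure ℝ)] (fun u => (((Ioo 0 ω).indicator E' u : ℝ) : ℂ)) := by
        have h1 : ∀ᵐ u ∂(volume : Measure ℝ), u ∈ Ioo 0 ω → E u = E' u :=
          (ae_restrict_iff' measurableSet_Ioo).mp hEE'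
        filter_upwards [h1] with u hu
        by_cases h : u ∈ Ioo (0:ℝ) ω
        · rw [Set.indicator_of_mem h, Set.indicator_of_mem h, hu h]
        · rw [Set.indicator_of_notMem h, Set.indicator_of_notMem h]
      have hfc : ((Ioo 0 ω).indicator f)
          =ᶠ[ae (volume : Measure ℝ)] ((Ioo 0 ω).indicator f') := by
        have h1 : ∀ᵐ u ∂(volume : Measure ℝ), u ∈ Ioo 0 ω → f u = f' u :=
          (ae_restrict_iff' measurableSet_Ioo).mp hff'
        filter_upwards [h1] with u hu
        by_cases h : u ∈ Ioo (0:ℝ) ω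
        · rw [Set.indicator_of_mem h, Set.indicator_of_mem h, hu h]
        · rw [Set.indicator_of_notMem h, Set.indicator_of_notMem h]
      filter_upwards [(hmp x).quasiMeasurePreserving.ae_eq_comp hEc, hfc] with t h1 h2
      simp only [Function.comp_apply] at h1
      rw [h1, h2]
    rw [s1, s2]
  have hgae : (fun x : ℝ => c • ∫ t in Ioo (0:ℝ) x, (E (x - t) : ℂ) * f t)
      =ᶠ[ae μI] (fun x => c • ∫ t, F2 (x, t)) := by
    rw [hμI]
    filter_upwards [ae_restrict_mem measurableSet_Ioo] with x hx
    rw [hgid x hx]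
  have hgm : AEStronglyMeasurable
      (fun x : ℝ => c • ∫ t in Ioo (0:ℝ) x, (E (x - t) : ℂ) * f t) μI :=
    ((hh.const_smul c).aestronglyMeasurable).congr hgae.symm
  have hfin : eLpNorm (fun x : ℝ => c • ∫ t in Ioo (0:ℝ) x, (E (x - t) : ℂ) * f t) P μI < ⊤ := by
    refine lt_of_le_of_lt hnorm ?_
    rw [hA]
    exact ENNReal.mul_lt_top (ENNReal.mul_lt_top ENNReal.ofReal_lt_top ENNReal.ofReal_lt_top)
      hf.2
  refine ⟨⟨hgm, hfin⟩, ?_⟩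
  rw [ENNReal.ofReal_mul hc, ← hA]
  exact hnorm
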